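/- Let 𝒞 be a simple circuit in Z², let 𝒳 be the set of vertices of Z² strictly inside 𝒞 (not including the vertices of 𝒞), and let Δ be the union of the crosses of the vertices of 𝒳. Let τ ∈ Ω^SI be a boundary condition in which the crosses of all vertices of 𝒞 are open. Then for all α > 0 and q > 0, the restriction to Δ of the superimposed measure P^{SI,τ}_{Δ,α,q} equals the restriction to Δ of the wired-wired measure P^{SI,11}_{Δ,α,q}. -/

import Mathlib

open MeasureTheory Filter Topology
open scoped ENNReal

namespace SixVertex

/-- Vertices of `ℤ²`. -/
abbrev Vx : Type := ℤ × ℤ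
/-- Faces of `ℤ²`, i.e. elements of `(ℤ²)* = ℤ² + (1/2,1/2)`; the face `p` corresponds to the
point `p + (1/2,1/2)`, i.e. to the unit square with corners `p`, `p+(1,0)`, `p+(0,1)`, `p+(1,1)`. -/
abbrev Face : Type := ℤ × ℤ

/-- `ℓ¹` (= graph) distance between faces in `(ℤ²)*`. -/
def fdist (p q : Face) : ℕ := (p.1 - q.1).natAbs + (p.2 - q.2).natAbs

/-- `ℓ¹` (= graph) distance between vertices of `ℤ²`. -/
def vdist (x y : Vx) : ℕ := (x.1 - y.1).natAbs + (x.2 - y.2).natAbs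

/-- Adjacency in `ℤ²` (or in `(ℤ²)*`). -/
def VAdj (x y : Vx) : Prop := vdist x y = 1

/-- The diagonal edges `E(𝕃) ∪ E(𝕃*)`, encoded as pairs `(x, b)` where `x ∈ ℤ²` is the vertex
of `ℤ²` the edge passes through, and `b` tells which of the two diagonals at `x` it is.
The cross at a vertex `x` consists of the two edges `(x, false)` and `(x, true)`. -/
abbrev Edge : Type := Vx × Bool

/-- The two endpoints (faces) of a diagonal edge: `(x, false)` joins the faces `x - (1,1)` and
`x` (the two faces at `x` of the parity of `x`), while `(x, true)` joins `x - (1,0)` and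
`x - (0,1)`. -/
def ep (e : Edge) : Face × Face :=
  if e.2 then (e.1 - (1, 0), e.1 - (0, 1)) else (e.1 - (1, 1), e.1)

/-- The edge `e` belongs to `E(𝕃)` (otherwise it belongs to `E(𝕃*)`). -/
def inL (e : Edge) : Prop := (Even (e.1.1 + e.1.2) ↔ e.2 = false)

/-- Configurations `η ∈ {0,1}^{E(𝕃) ∪ E(𝕃*)}` (the pair `(η⁰, η¹)` is encoded as a single
function on all diagonal edges). -/
abbrev SIConf : Type := Edge → Bool

/-- The cross at `x` is open in `η`. -/
def OpenCross (η : SIConf) (x : Vx) : Prop := η (x, false) = true ∧ η (x, true) = true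

/-- No cross is closed in `η`, i.e. `η` is a superimposed configuration (`η ∈ Ω^SI`). -/
def NoClosedCross (η : SIConf) : Prop := ∀ x : Vx, η (x, false) = true ∨ η (x, true) = true

/-- Two faces joined by an open edge of `η`. -/
def OpenAdj (η : SIConf) (p q : Face) : Prop :=
  ∃ e : Edge, η e = true ∧ (ep e = (p, q) ∨ ep e = (q, p))

/-- Connectivity by open paths. -/
def ConnectedIn (η : SIConf) : Face → Face → Prop := Relation.ReflTransGen (OpenAdj η)

/-- The cluster of the face `p` in `η`. -/
def cluster (η : SIConf) (p : Face) : Set Face := {q | ConnectedIn η p q}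

/-- The face `p` is incident to some edge of `Δ`. -/
def TouchesDelta (Δ : Set Edge) (p : Face) : Prop := ∃ e ∈ Δ, (ep e).1 = p ∨ (ep e).2 = p

/-- `N_Δ(η)`: the number of open crosses of `η` having an edge in `Δ`. -/
noncomputable def NDelta (Δ : Set Edge) (η : SIConf) : ℕ :=
  Set.ncard {x : Vx | OpenCross η x ∧ ((x, false) ∈ Δ ∨ (x, true) ∈ Δ)}

/-- `k_Δ(η) = k_Δ(η⁰) + k_Δ(η¹)`: the total number of clusters of `η` (equivalently, of `η⁰`
in `𝕃` plus those of `η¹` in `𝕃*`, since open edges never join faces of different parity)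
containing a face incident to an edge of `Δ`. -/
noncomputable def kDelta (Δ : Set Edge) (η : SIConf) : ℕ :=
  Set.ncard {C : Set Face | ∃ p : Face, TouchesDelta Δ p ∧ C = cluster η p}

/-- `η` is a superimposed configuration agreeing with `τ` off `Δ` (`η ∈ Ω^{SI,τ}_Δ`). -/
def SIok (Δ : Set Edge) (τ : SIConf) (η : SIConf) : Prop :=
  NoClosedCross η ∧ ∀ e ∉ Δ, η e = τ e

/-- The weight `α^{N_Δ(η)} q^{k_Δ(η)}` of the superimposed model. -/
noncomputable def SIweight (Δ : Set Edge) (α q : ℝ) (η : SIConf) : ℝ≥0∞ :=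
  ENNReal.ofReal (α ^ NDelta Δ η * q ^ kDelta Δ η)

/-- The finite-volume superimposed measure `P^{SI,τ}_{Δ,α,q}`. -/
noncomputable def SIfin (Δ : Set Edge) (α q : ℝ) (τ : SIConf) : Measure SIConf :=
  (∑' η : {η : SIConf // SIok Δ τ η}, SIweight Δ α q η.1)⁻¹ •
    Measure.sum (fun η : {η : SIConf // SIok Δ τ η} => SIweight Δ α q η.1 • Measure.dirac η.1)

/-- The all-open ("wired-wired", `11`) boundary condition. -/
def wiredwired : SIConf := fun _ => true

/-! ### Diamond domains -/

/-- The diamond `Λ = {u : dist(u,v) ≤ n}` of faces. -/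
def diamond (v : Face) (n : ℕ) : Set Face := {u | fdist u v ≤ n}

/-- `(v, n)` determines a diamond domain: `v ∈ 𝕃` and `n` a positive even integer. -/
def IsDiamond (v : Face) (n : ℕ) : Prop := Even (v.1 + v.2) ∧ 0 < n ∧ Even n

/-- The edge of `E(𝕃)` in the cross at `x`. -/
def LEdgeAt (x : Vx) : Edge := if Even (x.1 + x.2) then (x, false) else (x, true)

/-- `Δ(Λ)`: edges of `𝕃` with both endpoints in `Λ`, together with their dual edges
(equivalently: the full crosses whose `𝕃`-edge has both endpoints in `Λ`). -/
def deltaOf (v : Face) (n : ℕ) : Set Edge :=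
  {e | (ep (LEdgeAt e.1)).1 ∈ diamond v n ∧ (ep (LEdgeAt e.1)).2 ∈ diamond v n}

/-! ### Spin configurations -/

/-- Spin configurations on the faces; `true` is the spin `+`, `false` the spin `-`. -/
abbrev SpinConf : Type := Face → Bool

/-- The ice rule: at each vertex of `ℤ²`, at least one of the two diagonals consists of
equal spins. -/
def IceRule (σ : SpinConf) : Prop :=
  ∀ x : Vx, σ (x - (1, 1)) = σ x ∨ σ (x - (1, 0)) = σ (x - (0, 1))

/-- `x` is a saddle point of `σ`: both diagonals at `x` have constant spin. -/
def Saddle (σ : SpinConf) (x : Vx) : Prop :=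
  σ (x - (1, 1)) = σ x ∧ σ (x - (1, 0)) = σ (x - (0, 1))

/-- The face `p` is incident to the vertex `x` of `ℤ²` (i.e. `x` is a corner of `p`). -/
def FaceInc (p : Face) (x : Vx) : Prop :=
  ∃ a ∈ ({0, 1} : Set ℤ), ∃ b ∈ ({0, 1} : Set ℤ), p = x - (a, b)

/-- Vertices of `𝛬̂`: vertices of `ℤ²` on or inside the circuit `∂†Λ`, i.e. corners of
faces of `Λ`. -/
def HatVert (v : Face) (n : ℕ) (x : Vx) : Prop := ∃ p ∈ diamond v n, FaceInc p x

/-- Internal vertices of `𝛬̂`: vertices all of whose four incident `ℤ²`-edges belong to the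
induced subgraph `𝛬̂`. -/
def InternalVert (v : Face) (n : ℕ) (x : Vx) : Prop :=
  HatVert v n x ∧ ∀ y : Vx, VAdj x y → HatVert v n y

/-- `#saddle_Λ(σ)`: the number of saddle points of `σ` among internal vertices of `𝛬̂`. -/
noncomputable def saddleCount (v : Face) (n : ℕ) (σ : SpinConf) : ℕ :=
  Set.ncard {x : Vx | InternalVert v n x ∧ Saddle σ x}

/-- `Ω^{spin,ij}_Λ`: spin configurations satisfying the ice rule, equal to `i` on the outer
boundary of `Λ` and on all of `𝕃*` outside `Λ`, and equal to `j` on the inner boundary of `Λ`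
and on all of `𝕃` outside `Λ`.  (All faces at distance `≥ n` from the center receive the
boundary spin of their sublattice.) -/
def OmegaSpin (v : Face) (n : ℕ) (i j : Bool) (σ : SpinConf) : Prop :=
  IceRule σ ∧ ∀ p : Face, n ≤ fdist p v → σ p = (if Even (p.1 + p.2) then j else i)

/-- The weight `c^{#saddle_Λ(σ)}`. -/
noncomputable def spinWeight (v : Face) (n : ℕ) (c : ℝ) (σ : SpinConf) : ℝ≥0∞ :=
  ENNReal.ofReal (c ^ saddleCount v n σ)

/-- The finite-volume spin measure `P^{spin,ij}_{Λ,c}`. -/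
noncomputable def spinFin (v : Face) (n : ℕ) (c : ℝ) (i j : Bool) : Measure SpinConf :=
  (∑' σ : {σ : SpinConf // OmegaSpin v n i j σ}, spinWeight v n c σ.1)⁻¹ •
    Measure.sum (fun σ : {σ : SpinConf // OmegaSpin v n i j σ} =>
      spinWeight v n c σ.1 • Measure.dirac σ.1)

/-- Compatibility `σ ∼ η`: every open edge of `η` has endpoints with equal spins. -/
def Compat (σ : SpinConf) (η : SIConf) : Prop :=
  ∀ e : Edge, η e = true → σ (ep e).1 = σ (ep e).2

/-! ### Bernoulli site percolation on `ℤ²` and its critical probability -/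

/-- `ν` is the law of i.i.d. Bernoulli(`p`) site percolation on `ℤ²`. -/
def IsBernoulliField (p : ℝ) (ν : Measure (Vx → Bool)) : Prop :=
  IsProbabilityMeasure ν ∧
    ∀ (S : Finset Vx) (s : Vx → Bool),
      ν {ω | ∀ x ∈ S, ω x = s x} =
        ∏ x ∈ S, (if s x = true then ENNReal.ofReal p else ENNReal.ofReal (1 - p))

/-- Site-percolation adjacency: neighbouring open sites. -/
def SiteOpenAdj (ω : Vx → Bool) (x y : Vx) : Prop := VAdj x y ∧ ω x = true ∧ ω y = true

/-- The open cluster of a site. -/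
def siteCluster (ω : Vx → Bool) (x : Vx) : Set Vx :=
  {y | Relation.ReflTransGen (SiteOpenAdj ω) x y}

/-- The critical probability `p_c` of Bernoulli site percolation on `ℤ²`: the supremum of
`p ∈ [0,1]` for which Bernoulli(`p`) site percolation a.s. has no infinite open cluster. -/
noncomputable def pcSite : ℝ :=
  sSup {p : ℝ | 0 ≤ p ∧ p ≤ 1 ∧ ∀ ν : Measure (Vx → Bool), IsBernoulliField p ν →
    ν {ω | ∃ x, ω x = true ∧ (siteCluster ω x).Infinite} = 0}

/-! ### Infinite-volume limits -/

/-- A sequence of diamond domains increasing to `(ℤ²)*`. -/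
def DiamondExhaustion (v : ℕ → Face) (n : ℕ → ℕ) : Prop :=
  (∀ k, IsDiamond (v k) (n k)) ∧
  (∀ k, diamond (v k) (n k) ⊆ diamond (v (k + 1)) (n (k + 1))) ∧
  (∀ u : Face, ∃ k, u ∈ diamond (v k) (n k))

/-- `P` is the weak limit of the finite-volume superimposed measures with boundary condition
`τ` along any sequence of diamond domains increasing to `(ℤ²)*`. -/
def IsSILimitFor (α q : ℝ) (τ : SIConf) (P : Measure SIConf) : Prop :=
  ∀ (v : ℕ → Face) (n : ℕ → ℕ), DiamondExhaustion v n →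
    ∀ f : SIConf → ℝ, Continuous f → (∃ M, ∀ η, |f η| ≤ M) →
      Tendsto (fun k => ∫ η, f η ∂(SIfin (deltaOf (v k) (n k)) α q τ)) atTop
        (nhds (∫ η, f η ∂P))

/-- `P` is the infinite-volume superimposed measure `P^{SI}_{α,q}`: the common weak limit of
the finite-volume measures over all boundary conditions. -/
def IsSILimit (α q : ℝ) (P : Measure SIConf) : Prop :=
  IsProbabilityMeasure P ∧ ∀ τ : SIConf, NoClosedCross τ → IsSILimitFor α q τ P

/-- `P` is the weak limit `P^{spin,ij}_c` of the finite-volume spin measures along any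
sequence of diamond domains increasing to `(ℤ²)*`. -/
def IsSpinLimit (c : ℝ) (i j : Bool) (P : Measure SpinConf) : Prop :=
  IsProbabilityMeasure P ∧
    ∀ (v : ℕ → Face) (n : ℕ → ℕ), DiamondExhaustion v n →
      ∀ f : SpinConf → ℝ, Continuous f → (∃ M, ∀ σ, |f σ| ≤ M) →
        Tendsto (fun k => ∫ σ, f σ ∂(spinFin (v k) (n k) c i j)) atTop (nhds (∫ σ, f σ ∂P))

end SixVertex

namespace SixVertex

/-- A simple circuit in `ℤ²`, given as a cyclically-indexed injective sequence of vertices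
with consecutive vertices adjacent. -/
def IsSimpleCircuit {m : ℕ} (C : ZMod m → Vx) : Prop :=
  Function.Injective C ∧ ∀ k : ZMod m, VAdj (C k) (C (k + 1))

/-- Adjacency in `ℤ²` avoiding the set `S`. -/
def AvoidAdj (S : Set Vx) (x y : Vx) : Prop := VAdj x y ∧ x ∉ S ∧ y ∉ S

/-- The vertices strictly inside the circuit `C`: those not on `C` whose connected component
in `ℤ² ∖ C` is finite. -/
def insideOf {m : ℕ} (C : ZMod m → Vx) : Set Vx :=
  {x | x ∉ Set.range C ∧ {y | Relation.ReflTransGen (AvoidAdj (Set.range C)) x y}.Finite}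

section Stmt7Aux

open Classical

/-- The four faces of the cross at `x`. -/
def FOC (x : Vx) (p : Face) : Prop :=
  p = x - (1, 1) ∨ p = x ∨ p = x - (1, 0) ∨ p = x - (0, 1)

/-- Same parity of faces. -/
def sp (p q : Face) : Prop := (p.1 + p.2) % 2 = (q.1 + q.2) % 2

lemma sp_refl (p : Face) : sp p p := rfl
lemma sp_symm {p q : Face} (h : sp p q) : sp q p := Eq.symm h
lemma sp_trans {p q r : Face} (h : sp p q) (h' : sp q r) : sp p r := Eq.trans h h'

lemma FOC_iff (x : Vx) (p : Face) :
    FOC x p ↔ ((p.1 = x.1 - 1 ∧ p.2 = x.2 - 1) ∨ (p.1 = x.1 ∧ p.2 = x.2) ∨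
      (p.1 = x.1 - 1 ∧ p.2 = x.2) ∨ (p.1 = x.1 ∧ p.2 = x.2 - 1)) := by
  simp [FOC, Prod.ext_iff]

lemma ep_fst_FOC (e : Edge) : FOC e.1 (ep e).1 := by
  rcases e with ⟨x, b⟩; cases b <;> simp [ep, FOC]

lemma ep_snd_FOC (e : Edge) : FOC e.1 (ep e).2 := by
  rcases e with ⟨x, b⟩; cases b <;> simp [ep, FOC]

lemma ep_sp (e : Edge) : sp (ep e).1 (ep e).2 := by
  rcases e with ⟨x, b⟩; cases b <;> simp [ep, sp] <;> omega

lemma vadj_symm {x y : Vx} (h : VAdj x y) : VAdj y x := by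
  unfold VAdj vdist at *; omega

lemma cross_conn {η : SIConf} {x : Vx} (hx : OpenCross η x) {p q : Face}
    (hp : FOC x p) (hq : FOC x q) (hpq : sp p q) : ConnectedIn η p q := by
  have h1 : OpenAdj η (x - (1, 1)) x := ⟨(x, false), hx.1, Or.inl (by simp [ep])⟩
  have h2 : OpenAdj η (x - (1, 0)) (x - (0, 1)) := ⟨(x, true), hx.2, Or.inl (by simp [ep])⟩
  have h1' : OpenAdj η x (x - (1, 1)) := ⟨(x, false), hx.1, Or.inr (by simp [ep])⟩
  have h2' : OpenAdj η (x - (0, 1)) (x - (1, 0)) := ⟨(x, true), hx.2, Or.inr (by simp [ep])⟩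
  rcases hp with rfl | rfl | rfl | rfl <;> rcases hq with rfl | rfl | rfl | rfl <;>
    first
      | exact Relation.ReflTransGen.refl
      | exact Relation.ReflTransGen.single h1
      | exact Relation.ReflTransGen.single h2
      | exact Relation.ReflTransGen.single h1'
      | exact Relation.ReflTransGen.single h2'
      | (exfalso; revert hpq; simp [sp] <;> omega)

lemma adj_shared {x y : Vx} (h : VAdj x y) (s : Face) :
    ∃ u, FOC x u ∧ FOC y u ∧ sp s u := by
  have hd : (y.1 = x.1 + 1 ∧ y.2 = x.2) ∨ (y.1 = x.1 - 1 ∧ y.2 = x.2) ∨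
      (y.1 = x.1 ∧ y.2 = x.2 + 1) ∨ (y.1 = x.1 ∧ y.2 = x.2 - 1) := by
    unfold VAdj vdist at h; omega
  by_cases hpar : (s.1 + s.2) % 2 = (x.1 + x.2) % 2
  · rcases hd with ⟨h1, h2⟩ | ⟨h1, h2⟩ | ⟨h1, h2⟩ | ⟨h1, h2⟩
    · exact ⟨(x.1, x.2), by simp [FOC_iff], by simp [FOC_iff]; omega, by simp [sp]; omega⟩
    · exact ⟨(x.1 - 1, x.2 - 1), by simp [FOC_iff], by simp [FOC_iff]; omega, by simp [sp]; omega⟩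
    · exact ⟨(x.1, x.2), by simp [FOC_iff], by simp [FOC_iff]; omega, by simp [sp]; omega⟩
    · exact ⟨(x.1 - 1, x.2 - 1), by simp [FOC_iff], by simp [FOC_iff]; omega, by simp [sp]; omega⟩
  · rcases hd with ⟨h1, h2⟩ | ⟨h1, h2⟩ | ⟨h1, h2⟩ | ⟨h1, h2⟩
    · exact ⟨(x.1, x.2 - 1), by simp [FOC_iff], by simp [FOC_iff]; omega, by simp [sp]; omega⟩
    · exact ⟨(x.1 - 1, x.2), by simp [FOC_iff], by simp [FOC_iff]; omega, by simp [sp]; omega⟩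
    · exact ⟨(x.1 - 1, x.2), by simp [FOC_iff], by simp [FOC_iff]; omega, by simp [sp]; omega⟩
    · exact ⟨(x.1, x.2 - 1), by simp [FOC_iff], by simp [FOC_iff]; omega, by simp [sp]; omega⟩

section Circuit

variable {m : ℕ} {C : ZMod m → Vx} {η : SIConf}

lemma chain_conn (hoC : ∀ k, OpenCross η (C k)) (hadj : ∀ k, VAdj (C k) (C (k + 1))) :
    ∀ (n : ℕ) (k : ZMod m) (s t : Face), FOC (C k) s → FOC (C (k + (n : ZMod m))) t →
      sp s t → ConnectedIn η s t := by
  intro n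
  induction n with
  | zero =>
    intro k s t hs ht hst
    rw [Nat.cast_zero, add_zero] at ht
    exact cross_conn (hoC k) hs ht hst
  | succ n ih =>
    intro k s t hs ht hst
    have hcast : ((n + 1 : ℕ) : ZMod m) = (n : ZMod m) + 1 := by push_cast; ring
    rw [hcast, ← add_assoc] at ht
    obtain ⟨u, hu1, hu2, hsu⟩ := adj_shared (hadj (k + (n : ZMod m))) s
    exact (ih k s u hs hu1 hsu).trans
      (cross_conn (hoC _) hu2 ht (sp_trans (sp_symm hsu) hst))

lemma circ_conn [NeZero m] (hoC : ∀ k, OpenCross η (C k))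
    (hadj : ∀ k, VAdj (C k) (C (k + 1))) {s t : Face}
    (hs : ∃ k, FOC (C k) s) (ht : ∃ j, FOC (C j) t) (hst : sp s t) :
    ConnectedIn η s t := by
  obtain ⟨k, hk⟩ := hs
  obtain ⟨j, hj⟩ := ht
  have hval : (((j - k).val : ℕ) : ZMod m) = j - k := ZMod.natCast_rightInverse _
  refine chain_conn hoC hadj (j - k).val k s t hk ?_ hst
  rw [hval, show k + (j - k) = j from by ring]
  exact hj

end Circuit

section Inside

variable {m : ℕ} {C : ZMod m → Vx}

lemma stepX {x y : Vx} (hx : x ∈ insideOf C) (hxy : VAdj x y)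
    (hy : y ∉ Set.range C) : y ∈ insideOf C := by
  refine ⟨hy, Set.Finite.subset hx.2 ?_⟩
  intro z hz
  exact Relation.ReflTransGen.head ⟨hxy, hx.1, hy⟩ hz

lemma circuit_corner {p : Face}
    (hx : ∃ x ∈ insideOf C, FOC x p) (hz : ∃ z, z ∉ insideOf C ∧ FOC z p) :
    ∃ k, FOC (C k) p := by
  by_contra hn
  push_neg at hn
  have hnc : ∀ w, FOC w p → w ∉ Set.range C := by
    rintro w hw ⟨k, rfl⟩; exact hn k hw
  have hcor : ∀ w : Vx, FOC w p ↔
      (w = ((p.1 + 1, p.2 + 1) : Vx) ∨ w = (p.1, p.2) ∨ w = (p.1 + 1, p.2) ∨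
        w = (p.1, p.2 + 1)) := by
    intro w; rw [FOC_iff]; simp [Prod.ext_iff] <;> omega
  have key : ∀ w w' : Vx, FOC w' p → VAdj w w' → w ∈ insideOf C → w' ∈ insideOf C :=
    fun w w' hw' hadj hin => stepX hin hadj (hnc w' hw')
  have hfa : FOC ((p.1 + 1, p.2 + 1) : Vx) p := (hcor _).mpr (Or.inl rfl)
  have hfb : FOC ((p.1, p.2) : Vx) p := (hcor _).mpr (Or.inr (Or.inl rfl))
  have hfc : FOC ((p.1 + 1, p.2) : Vx) p := (hcor _).mpr (Or.inr (Or.inr (Or.inl rfl)))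
  have hfd : FOC ((p.1, p.2 + 1) : Vx) p := (hcor _).mpr (Or.inr (Or.inr (Or.inr rfl)))
  have habc : VAdj ((p.1, p.2) : Vx) ((p.1 + 1, p.2) : Vx) := by
    show (p.1 - (p.1 + 1)).natAbs + (p.2 - p.2).natAbs = 1; omega
  have hca : VAdj ((p.1 + 1, p.2) : Vx) ((p.1 + 1, p.2 + 1) : Vx) := by
    show (p.1 + 1 - (p.1 + 1)).natAbs + (p.2 - (p.2 + 1)).natAbs = 1; omega
  have had : VAdj ((p.1 + 1, p.2 + 1) : Vx) ((p.1, p.2 + 1) : Vx) := by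
    show (p.1 + 1 - p.1).natAbs + (p.2 + 1 - (p.2 + 1)).natAbs = 1; omega
  have hdb : VAdj ((p.1, p.2 + 1) : Vx) ((p.1, p.2) : Vx) := by
    show (p.1 - p.1).natAbs + (p.2 + 1 - p.2).natAbs = 1; omega
  have e1 : ((p.1, p.2) : Vx) ∈ insideOf C ↔ ((p.1 + 1, p.2) : Vx) ∈ insideOf C :=
    ⟨key _ _ hfc habc, key _ _ hfb (vadj_symm habc)⟩
  have e2 : ((p.1 + 1, p.2) : Vx) ∈ insideOf C ↔ ((p.1 + 1, p.2 + 1) : Vx) ∈ insideOf C :=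
    ⟨key _ _ hfa hca, key _ _ hfc (vadj_symm hca)⟩
  have e3 : ((p.1 + 1, p.2 + 1) : Vx) ∈ insideOf C ↔ ((p.1, p.2 + 1) : Vx) ∈ insideOf C :=
    ⟨key _ _ hfd had, key _ _ hfa (vadj_symm had)⟩
  obtain ⟨x, hxX, hxp⟩ := hx
  obtain ⟨z, hzX, hzp⟩ := hz
  rw [hcor] at hxp hzp
  rcases hxp with rfl | rfl | rfl | rfl <;> rcases hzp with rfl | rfl | rfl | rfl <;> tauto

lemma touches_iff {p : Face} :
    TouchesDelta {e : Edge | e.1 ∈ insideOf C} p ↔ ∃ x ∈ insideOf C, FOC x p := by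
  constructor
  · rintro ⟨e, he, hp⟩
    refine ⟨e.1, he, ?_⟩
    rcases hp with h | h
    · exact h ▸ ep_fst_FOC e
    · exact h ▸ ep_snd_FOC e
  · rintro ⟨x, hx, rfl | rfl | rfl | rfl⟩
    · exact ⟨(x, false), hx, Or.inl (by simp [ep])⟩
    · exact ⟨(p, false), hx, Or.inr (by simp [ep])⟩
    · exact ⟨(x, true), hx, Or.inl (by simp [ep])⟩
    · exact ⟨(x, true), hx, Or.inr (by simp [ep])⟩

end Inside

end Stmt7Aux

section Stmt7Main

open Classical

variable {m : ℕ} {C : ZMod m → Vx}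

/-- Replace the configuration outside the inside crosses by all-open. -/
noncomputable def Phi (C : ZMod m → Vx) (η : SIConf) : SIConf :=
  fun e => if e.1 ∈ insideOf C then η e else true

/-- Replace the configuration outside the inside crosses by `τ`. -/
noncomputable def Psi (C : ZMod m → Vx) (τ η : SIConf) : SIConf :=
  fun e => if e.1 ∈ insideOf C then η e else τ e

lemma Phi_mem {η : SIConf} {e : Edge} (he : e.1 ∈ insideOf C) : Phi C η e = η e := if_pos he
lemma Phi_not_mem {η : SIConf} {e : Edge} (he : e.1 ∉ insideOf C) : Phi C η e = true :=
  if_neg he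
lemma Psi_mem {τ η : SIConf} {e : Edge} (he : e.1 ∈ insideOf C) : Psi C τ η e = η e :=
  if_pos he
lemma Psi_not_mem {τ η : SIConf} {e : Edge} (he : e.1 ∉ insideOf C) : Psi C τ η e = τ e :=
  if_neg he

lemma siok_phi {τ η : SIConf} (h : SIok {e : Edge | e.1 ∈ insideOf C} τ η) :
    SIok {e : Edge | e.1 ∈ insideOf C} wiredwired (Phi C η) := by
  constructor
  · intro x
    by_cases hx : x ∈ insideOf C
    · rcases h.1 x with h' | h'
      · exact Or.inl (by rw [Phi_mem hx]; exact h')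
      · exact Or.inr (by rw [Phi_mem hx]; exact h')
    · exact Or.inl (Phi_not_mem hx)
  · intro e he
    exact Phi_not_mem he

lemma siok_psi {τ η : SIConf} (hτ : NoClosedCross τ)
    (h : SIok {e : Edge | e.1 ∈ insideOf C} wiredwired η) :
    SIok {e : Edge | e.1 ∈ insideOf C} τ (Psi C τ η) := by
  constructor
  · intro x
    by_cases hx : x ∈ insideOf C
    · rcases h.1 x with h' | h'
      · exact Or.inl (by rw [Psi_mem hx]; exact h')
      · exact Or.inr (by rw [Psi_mem hx]; exact h')
    · rcases hτ x with h' | h'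
      · exact Or.inl (by rw [Psi_not_mem hx]; exact h')
      · exact Or.inr (by rw [Psi_not_mem hx]; exact h')
  · intro e he
    exact Psi_not_mem he

/-- The weight- and restriction-preserving bijection between the two sets of admissible
configurations. -/
noncomputable def okEquiv (C : ZMod m → Vx) (τ : SIConf) (hτ : NoClosedCross τ) :
    {η : SIConf // SIok {e : Edge | e.1 ∈ insideOf C} τ η} ≃
      {η : SIConf // SIok {e : Edge | e.1 ∈ insideOf C} wiredwired η} where
  toFun η := ⟨Phi C η.1, siok_phi η.2⟩
  invFun η := ⟨Psi C τ η.1, siok_psi hτ η.2⟩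
  left_inv η := by
    apply Subtype.ext; funext e
    show Psi C τ (Phi C η.1) e = η.1 e
    by_cases he : e.1 ∈ insideOf C
    · rw [Psi_mem he, Phi_mem he]
    · rw [Psi_not_mem he]; exact (η.2.2 e he).symm
  right_inv η := by
    apply Subtype.ext; funext e
    show Phi C (Psi C τ η.1) e = η.1 e
    by_cases he : e.1 ∈ insideOf C
    · rw [Phi_mem he, Psi_mem he]
    · rw [Phi_not_mem he]; exact (η.2.2 e he).symm

lemma conn_iff [NeZero m] (hCadj : ∀ k : ZMod m, VAdj (C k) (C (k + 1)))
    {τ η : SIConf} (hτC : ∀ k, OpenCross τ (C k))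
    (hok : SIok {e : Edge | e.1 ∈ insideOf C} τ η)
    {p q : Face} (hp : TouchesDelta {e : Edge | e.1 ∈ insideOf C} p)
    (hq : TouchesDelta {e : Edge | e.1 ∈ insideOf C} q) :
    ConnectedIn η p q ↔ ConnectedIn (Phi C η) p q := by
  have hoC : ∀ k, OpenCross η (C k) := by
    intro k
    have hne : C k ∉ insideOf C := fun h => h.1 ⟨k, rfl⟩
    exact ⟨by rw [hok.2 (C k, false) hne]; exact (hτC k).1,
      by rw [hok.2 (C k, true) hne]; exact (hτC k).2⟩
  constructor
  · refine Relation.ReflTransGen.mono ?_ p q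
    rintro a b ⟨e, he, hee⟩
    refine ⟨e, ?_, hee⟩
    by_cases hd : e.1 ∈ insideOf C
    · rw [Phi_mem hd]; exact he
    · exact Phi_not_mem hd
  · intro hconn
    have main : ∀ r, ConnectedIn (Phi C η) p r →
        sp p r ∧ (TouchesDelta {e : Edge | e.1 ∈ insideOf C} r → ConnectedIn η p r) ∧
          (¬ TouchesDelta {e : Edge | e.1 ∈ insideOf C} r →
            ∃ s, (∃ k, FOC (C k) s) ∧ sp p s ∧ ConnectedIn η p s) := by
      intro r hr
      induction hr with
      | refl => exact ⟨sp_refl p, fun _ => Relation.ReflTransGen.refl, fun hn => absurd hp hn⟩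
      | @tail b c hpb hbc ih =>
        obtain ⟨e, heo, hee⟩ := hbc
        have hFb : FOC e.1 b ∧ FOC e.1 c := by
          rcases hee with h | h
          · have h1 := ep_fst_FOC e; have h2 := ep_snd_FOC e
            rw [h] at h1 h2; exact ⟨h1, h2⟩
          · have h1 := ep_fst_FOC e; have h2 := ep_snd_FOC e
            rw [h] at h1 h2; exact ⟨h2, h1⟩
        have hspbc : sp b c := by
          rcases hee with h | h
          · have := ep_sp e; rw [h] at this; exact this
          · have := ep_sp e; rw [h] at this; exact sp_symm this
        obtain ⟨ihsp, ihT, ihJ⟩ := ih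
        have hspc : sp p c := sp_trans ihsp hspbc
        by_cases hd : e.1 ∈ insideOf C
        · have heη : η e = true := by
            rw [← Phi_mem (C := C) (η := η) hd]; exact heo
          have hepb : (ep e).1 = b ∨ (ep e).2 = b := by
            rcases hee with h | h
            · exact Or.inl (by rw [h])
            · exact Or.inr (by rw [h])
          have hepc : (ep e).1 = c ∨ (ep e).2 = c := by
            rcases hee with h | h
            · exact Or.inr (by rw [h])
            · exact Or.inl (by rw [h])
          have hTb : TouchesDelta {e : Edge | e.1 ∈ insideOf C} b := ⟨e, hd, hepb⟩
          have hTc : TouchesDelta {e : Edge | e.1 ∈ insideOf C} c := ⟨e, hd, hepc⟩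
          exact ⟨hspc, fun _ => (ihT hTb).tail ⟨e, heη, hee⟩, fun hn => absurd hTc hn⟩
        · by_cases hTb : TouchesDelta {e : Edge | e.1 ∈ insideOf C} b
          · have hbC : ∃ k, FOC (C k) b :=
              circuit_corner (touches_iff.mp hTb) ⟨e.1, hd, hFb.1⟩
            have hpb' : ConnectedIn η p b := ihT hTb
            by_cases hTc : TouchesDelta {e : Edge | e.1 ∈ insideOf C} c
            · have hcC : ∃ k, FOC (C k) c :=
                circuit_corner (touches_iff.mp hTc) ⟨e.1, hd, hFb.2⟩
              exact ⟨hspc, fun _ => hpb'.trans (circ_conn hoC hCadj hbC hcC hspbc),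
                fun hn => absurd hTc hn⟩
            · exact ⟨hspc, fun h => absurd h hTc, fun _ => ⟨b, hbC, ihsp, hpb'⟩⟩
          · obtain ⟨s, hsC, hps, hpsc⟩ := ihJ hTb
            by_cases hTc : TouchesDelta {e : Edge | e.1 ∈ insideOf C} c
            · have hcC : ∃ k, FOC (C k) c :=
                circuit_corner (touches_iff.mp hTc) ⟨e.1, hd, hFb.2⟩
              exact ⟨hspc, fun _ => hpsc.trans (circ_conn hoC hCadj hsC hcC
                (sp_trans (sp_symm hps) hspc)), fun hn => absurd hTc hn⟩
            · exact ⟨hspc, fun h => absurd h hTc, fun _ => ⟨s, hsC, hps, hpsc⟩⟩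
    exact (main q hconn).2.1 hq

lemma openAdj_symm {η : SIConf} {a b : Face} (h : OpenAdj η a b) : OpenAdj η b a := by
  obtain ⟨e, he, h2⟩ := h; exact ⟨e, he, h2.symm⟩

lemma conn_symm {η : SIConf} {a b : Face} (h : ConnectedIn η a b) : ConnectedIn η b a :=
  by
    haveI : Std.Symm (OpenAdj η) := ⟨fun _ _ h' => openAdj_symm h'⟩
    exact Std.Symm.symm (r := Relation.ReflTransGen (OpenAdj η)) a b h

lemma cluster_eq_iff {η : SIConf} {a b : Face} :
    cluster η a = cluster η b ↔ ConnectedIn η a b := by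
  constructor
  · intro h
    have hb : b ∈ cluster η b := Relation.ReflTransGen.refl
    rw [← h] at hb
    exact hb
  · intro h
    ext z
    exact ⟨fun hz => Relation.ReflTransGen.trans (conn_symm h) hz,
      fun hz => Relation.ReflTransGen.trans h hz⟩

lemma ncard_image_eq_of_iff {α β γ : Type*} (f : α → β) (g : α → γ) (s : Set α)
    (h : ∀ p ∈ s, ∀ q ∈ s, (f p = f q ↔ g p = g q)) :
    (f '' s).ncard = (g '' s).ncard := by
  rcases s.eq_empty_or_nonempty with rfl | ⟨a0, ha0⟩
  · simp
  classical
  let G : β → γ := fun b => if hb : ∃ a, a ∈ s ∧ f a = b then g hb.choose else g a0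
  have hGf : ∀ a ∈ s, G (f a) = g a := by
    intro a ha
    have hb : ∃ a', a' ∈ s ∧ f a' = f a := ⟨a, ha, rfl⟩
    have h1 : G (f a) = g hb.choose := dif_pos hb
    rw [h1]
    exact (h _ hb.choose_spec.1 _ ha).mp hb.choose_spec.2
  have hGinj : Set.InjOn G (f '' s) := by
    rintro b1 ⟨a1, ha1, rfl⟩ b2 ⟨a2, ha2, rfl⟩ hgb
    rw [hGf a1 ha1, hGf a2 ha2] at hgb
    exact (h _ ha1 _ ha2).mpr hgb
  have himg : G '' (f '' s) = g '' s := by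
    rw [Set.image_image]
    ext c
    constructor
    · rintro ⟨a, ha, rfl⟩; exact ⟨a, ha, by simpa using (hGf a ha).symm⟩
    · rintro ⟨a, ha, rfl⟩; exact ⟨a, ha, by simpa using hGf a ha⟩
  rw [← himg, Set.ncard_image_of_injOn hGinj]

lemma NDelta_phi {η : SIConf} :
    NDelta {e : Edge | e.1 ∈ insideOf C} (Phi C η) = NDelta {e : Edge | e.1 ∈ insideOf C} η := by
  unfold NDelta
  congr 1
  ext x
  simp only [Set.mem_setOf_eq]
  constructor
  · rintro ⟨hoc, hmem⟩
    have hx : x ∈ insideOf C := by rcases hmem with h | h <;> exact h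
    exact ⟨⟨by rw [← Phi_mem (C := C) (η := η) (e := ((x : Vx), false)) hx]; exact hoc.1,
      by rw [← Phi_mem (C := C) (η := η) (e := ((x : Vx), true)) hx]; exact hoc.2⟩, hmem⟩
  · rintro ⟨hoc, hmem⟩
    have hx : x ∈ insideOf C := by rcases hmem with h | h <;> exact h
    exact ⟨⟨by rw [Phi_mem (C := C) (η := η) (e := ((x : Vx), false)) hx]; exact hoc.1,
      by rw [Phi_mem (C := C) (η := η) (e := ((x : Vx), true)) hx]; exact hoc.2⟩, hmem⟩

lemma kDelta_phi [NeZero m] (hCadj : ∀ k : ZMod m, VAdj (C k) (C (k + 1)))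
    {τ η : SIConf} (hτC : ∀ k, OpenCross τ (C k))
    (hok : SIok {e : Edge | e.1 ∈ insideOf C} τ η) :
    kDelta {e : Edge | e.1 ∈ insideOf C} (Phi C η) = kDelta {e : Edge | e.1 ∈ insideOf C} η := by
  unfold kDelta
  have h1 : ∀ ζ : SIConf,
      {Cl : Set Face | ∃ p, TouchesDelta {e : Edge | e.1 ∈ insideOf C} p ∧ Cl = cluster ζ p} =
        cluster ζ '' {p | TouchesDelta {e : Edge | e.1 ∈ insideOf C} p} := by
    intro ζ; ext Cl
    simp only [Set.mem_setOf_eq, Set.mem_image]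
    constructor
    · rintro ⟨p, hp, rfl⟩; exact ⟨p, hp, rfl⟩
    · rintro ⟨p, hp, rfl⟩; exact ⟨p, hp, rfl⟩
  rw [h1, h1]
  exact ncard_image_eq_of_iff _ _ _ fun a ha b hb => by
    rw [cluster_eq_iff, cluster_eq_iff]
    exact ⟨fun h => (conn_iff hCadj hτC hok ha hb).mpr h,
      fun h => (conn_iff hCadj hτC hok ha hb).mp h⟩

lemma SIweight_phi [NeZero m] (hCadj : ∀ k : ZMod m, VAdj (C k) (C (k + 1)))
    {τ η : SIConf} (hτC : ∀ k, OpenCross τ (C k))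
    (hok : SIok {e : Edge | e.1 ∈ insideOf C} τ η) (α q : ℝ) :
    SIweight {e : Edge | e.1 ∈ insideOf C} α q (Phi C η) =
      SIweight {e : Edge | e.1 ∈ insideOf C} α q η := by
  unfold SIweight
  rw [NDelta_phi, kDelta_phi hCadj hτC hok]

end Stmt7Main

/-- Let `𝒞` be a simple circuit in `ℤ²`, let `𝒳` be the set of vertices strictly inside it and
let `Δ` be the union of the crosses of the vertices of `𝒳`.  Let `τ ∈ Ω^SI` be a boundary
condition in which the crosses of all vertices of `𝒞` are open.  Then for all `α > 0` and
`q > 0`, the restriction to `Δ` of `P^{SI,τ}_{Δ,α,q}` equals the restriction to `Δ` of the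
wired-wired measure `P^{SI,11}_{Δ,α,q}`. -/
theorem stmt_7 (m : ℕ) (hm : 4 ≤ m) (C : ZMod m → Vx) (hC : IsSimpleCircuit C)
    (α q : ℝ) (hα : 0 < α) (hq : 0 < q) (τ : SIConf) (hτ : NoClosedCross τ)
    (hτC : ∀ k : ZMod m, OpenCross τ (C k)) :
    Measure.map (fun η : SIConf => fun e : {e : Edge // e.1 ∈ insideOf C} => η e.1)
        (SIfin {e : Edge | e.1 ∈ insideOf C} α q τ) =
      Measure.map (fun η : SIConf => fun e : {e : Edge // e.1 ∈ insideOf C} => η e.1)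
        (SIfin {e : Edge | e.1 ∈ insideOf C} α q wiredwired) := by
  classical
  have hNZ : NeZero m := ⟨by omega⟩
  obtain ⟨hCinj, hCadj⟩ := hC
  have hr : Measurable (fun η : SIConf => fun e : {e : Edge // e.1 ∈ insideOf C} => η e.1) :=
    measurable_pi_lambda _ fun e => measurable_pi_apply e.1
  refine Measure.ext fun s hs => ?_
  rw [Measure.map_apply hr hs, Measure.map_apply hr hs]
  set pre : Set SIConf :=
    (fun η : SIConf => fun e : {e : Edge // e.1 ∈ insideOf C} => η e.1) ⁻¹' s with hpredef
  have hpre : MeasurableSet pre := hr hs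
  rw [SIfin, SIfin, Measure.smul_apply, Measure.smul_apply,
    Measure.sum_apply _ hpre, Measure.sum_apply _ hpre]
  have hw : ∀ η : {η : SIConf // SIok {e : Edge | e.1 ∈ insideOf C} τ η},
      SIweight {e : Edge | e.1 ∈ insideOf C} α q (Phi C η.1) =
        SIweight {e : Edge | e.1 ∈ insideOf C} α q η.1 :=
    fun η => SIweight_phi hCadj hτC η.2 α q
  have hmempre : ∀ ζ : SIConf, Phi C ζ ∈ pre ↔ ζ ∈ pre := by
    intro ζ
    have hre : (fun e : {e : Edge // e.1 ∈ insideOf C} => Phi C ζ e.1) =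
        fun e : {e : Edge // e.1 ∈ insideOf C} => ζ e.1 :=
      funext fun e => Phi_mem e.2
    rw [hpredef]
    simp only [Set.mem_preimage]
    rw [hre]
  have hZ : (∑' η : {η : SIConf // SIok {e : Edge | e.1 ∈ insideOf C} wiredwired η},
      SIweight {e : Edge | e.1 ∈ insideOf C} α q η.1) =
      ∑' η : {η : SIConf // SIok {e : Edge | e.1 ∈ insideOf C} τ η},
        SIweight {e : Edge | e.1 ∈ insideOf C} α q η.1 := by
    rw [← Equiv.tsum_eq (okEquiv C τ hτ)
      (fun η : {η : SIConf // SIok {e : Edge | e.1 ∈ insideOf C} wiredwired η} =>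
        SIweight {e : Edge | e.1 ∈ insideOf C} α q η.1)]
    exact tsum_congr fun η => hw η
  have hS : (∑' η : {η : SIConf // SIok {e : Edge | e.1 ∈ insideOf C} wiredwired η},
      (SIweight {e : Edge | e.1 ∈ insideOf C} α q η.1 • Measure.dirac η.1) pre) =
      ∑' η : {η : SIConf // SIok {e : Edge | e.1 ∈ insideOf C} τ η},
        (SIweight {e : Edge | e.1 ∈ insideOf C} α q η.1 • Measure.dirac η.1) pre := by
    rw [← Equiv.tsum_eq (okEquiv C τ hτ)
      (fun η : {η : SIConf // SIok {e : Edge | e.1 ∈ insideOf C} wiredwired η} =>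
        (SIweight {e : Edge | e.1 ∈ insideOf C} α q η.1 • Measure.dirac η.1) pre)]
    refine tsum_congr fun η => ?_
    have h1 : ((okEquiv C τ hτ) η).1 = Phi C η.1 := rfl
    rw [Measure.smul_apply, Measure.smul_apply, h1, hw η,
      Measure.dirac_apply' _ hpre, Measure.dirac_apply' _ hpre]
    simp only [Set.indicator_apply, hmempre η.1, Pi.one_apply]
  rw [hZ, hS]

end SixVertex
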